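/- Let $A=[a_{i,j}]_{1\le i,j\le n}$ be a matrix over a commutative ring such that $a_{i,j}=0$ whenever $i+j$ is an even number greater than two. If $n=2m+1$ for some positive integer $m$, then $\det(A)=(-1)^m a_{1,1}\cdot\det[a_{2i,2j+1}]_{1\le i,j\le m}\cdot\det[a_{2i+1,2j}]_{1\le i,j\le m}$. -/
import Mathlib

open Equiv Matrix

private lemma sign_sumComm_fin (m : ℕ) :
    Equiv.Perm.sign ((Equiv.sumComm (Fin m) (Fin m)) : Equiv.Perm (Fin m ⊕ Fin m)) = (-1) ^ m := by
  have h : ((Equiv.sumComm (Fin m) (Fin m)) : Equiv.Perm (Fin m ⊕ Fin m)) =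
      (Equiv.boolProdEquivSum (Fin m)).permCongr
        (Equiv.prodCongrLeft (fun _ : Fin m => Equiv.swap false true)) := by
    ext x
    rcases x with k | k <;> simp [Equiv.permCongr_apply, Equiv.prodCongrLeft,
      Equiv.swap_apply_def]
  rw [h, Equiv.Perm.sign_permCongr, Equiv.Perm.sign_prodCongrLeft]
  simp [Equiv.Perm.sign_swap (by decide : (false : Bool) ≠ true)]

/-- If `A = [a_{i,j}]_{1 ≤ i,j ≤ n}` (rows/columns indexed `1..n`, realized as
`Fin n` with `i` standing for the `(i+1)`-st row/column) is a matrix over a commutative ring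
with `a_{i,j} = 0` whenever `i + j` is an even number greater than two, and `n = 2m+1` with
`m ≥ 1`, then `det(A) = (-1)^m a_{1,1} * det[a_{2i,2j+1}]_{1≤i,j≤m} * det[a_{2i+1,2j}]_{1≤i,j≤m}`. -/
theorem stmt3 {R : Type*} [CommRing R] (m : ℕ) (hm : 0 < m)
    (A : Matrix (Fin (2 * m + 1)) (Fin (2 * m + 1)) R)
    (hA : ∀ i j : Fin (2 * m + 1), Even (((i : ℕ) + 1) + ((j : ℕ) + 1)) →
      ((i : ℕ) + 1) + ((j : ℕ) + 1) > 2 → A i j = 0) :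
    A.det =
      (-1) ^ m * A ⟨0, by omega⟩ ⟨0, by omega⟩ *
      ((Matrix.of fun i j : Fin m =>
          A ⟨2 * (i : ℕ) + 1, by have := i.isLt; omega⟩
            ⟨2 * (j : ℕ) + 2, by have := j.isLt; omega⟩).det *
      (Matrix.of fun i j : Fin m =>
          A ⟨2 * (i : ℕ) + 2, by have := i.isLt; omega⟩
            ⟨2 * (j : ℕ) + 1, by have := j.isLt; omega⟩).det) := by
  classical
  have hA' : ∀ i j : Fin (2 * m + 1), ((i : ℕ) + (j : ℕ)) % 2 = 0 →
      0 < (i : ℕ) + (j : ℕ) → A i j = 0 := by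
    intro i j h1 h2
    exact hA i j ⟨((i : ℕ) + (j : ℕ)) / 2 + 1, by omega⟩ (by omega)
  -- row ordering: 1, odd rows ≥ 3, even rows
  set rr : (Fin 1 ⊕ Fin m) ⊕ Fin m → Fin (2 * m + 1) :=
    fun x => Sum.elim (Sum.elim (fun _ => ⟨0, by omega⟩)
      (fun (i : Fin m) => ⟨2 * (i : ℕ) + 2, by have := i.isLt; omega⟩))
      (fun (i : Fin m) => ⟨2 * (i : ℕ) + 1, by have := i.isLt; omega⟩) x with hrr
  -- column ordering: 1, even cols, odd cols ≥ 3
  set cc : (Fin 1 ⊕ Fin m) ⊕ Fin m → Fin (2 * m + 1) :=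
    fun x => Sum.elim (Sum.elim (fun _ => ⟨0, by omega⟩)
      (fun (j : Fin m) => ⟨2 * (j : ℕ) + 1, by have := j.isLt; omega⟩))
      (fun (j : Fin m) => ⟨2 * (j : ℕ) + 2, by have := j.isLt; omega⟩) x with hcc
  have vr1 : ∀ x : Fin 1, ((rr (Sum.inl (Sum.inl x))) : ℕ) = 0 := fun _ => rfl
  have vr2 : ∀ i : Fin m, ((rr (Sum.inl (Sum.inr i))) : ℕ) = 2 * (i : ℕ) + 2 := fun _ => rfl
  have vr3 : ∀ i : Fin m, ((rr (Sum.inr i)) : ℕ) = 2 * (i : ℕ) + 1 := fun _ => rfl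
  have vc1 : ∀ x : Fin 1, ((cc (Sum.inl (Sum.inl x))) : ℕ) = 0 := fun _ => rfl
  have vc2 : ∀ j : Fin m, ((cc (Sum.inl (Sum.inr j))) : ℕ) = 2 * (j : ℕ) + 1 := fun _ => rfl
  have vc3 : ∀ j : Fin m, ((cc (Sum.inr j)) : ℕ) = 2 * (j : ℕ) + 2 := fun _ => rfl
  have hbij : Function.Bijective rr := by
    rw [Fintype.bijective_iff_injective_and_card]
    constructor
    · rintro ((x | i) | i) ((y | j) | j) h <;>
        have h' := congrArg Fin.val h <;>
        simp only [vr1, vr2, vr3] at h' <;>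
        first
          | (exfalso; omega)
          | (exact congrArg (fun z => Sum.inl (Sum.inl z)) (Subsingleton.elim _ _))
          | (exact congrArg (fun z => Sum.inl (Sum.inr z)) (Fin.ext (by omega)))
          | (exact congrArg Sum.inr (Fin.ext (by omega)))
    · simp only [Fintype.card_sum, Fintype.card_fin]
      omega
  set r : ((Fin 1 ⊕ Fin m) ⊕ Fin m) ≃ Fin (2 * m + 1) := Equiv.ofBijective rr hbij with hr
  -- the block swap permutation
  set σ : Equiv.Perm ((Fin 1 ⊕ Fin m) ⊕ Fin m) :=
    (Equiv.sumAssoc (Fin 1) (Fin m) (Fin m)).symm.permCongr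
      (Equiv.sumCongr (Equiv.refl (Fin 1)) (Equiv.sumComm (Fin m) (Fin m))) with hσ
  have hσsign : Equiv.Perm.sign σ = (-1) ^ m := by
    rw [hσ, Equiv.Perm.sign_permCongr, Equiv.Perm.sign_sumCongr, sign_sumComm_fin]
    simp
  have hcr : ∀ x, cc x = rr (σ x) := by
    rintro ((x | i) | i) <;> rfl
  -- relate det of the reindexed matrix to det A
  have h1 : (A.submatrix rr cc).det = ((Equiv.Perm.sign σ : ℤ) : R) * A.det := by
    have heq : A.submatrix rr cc = (A.submatrix r r).submatrix id σ := by
      ext i j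
      simp only [Matrix.submatrix_apply, id_eq]
      rw [hcr]
      rfl
    rw [heq, Matrix.det_permute', Matrix.det_submatrix_equiv_self]
  -- compute det of the reindexed matrix by blocks
  set M := A.submatrix rr cc with hM
  have h12 : M.toBlocks₁₂ = 0 := by
    ext i j
    have hz : M.toBlocks₁₂ i j = A (rr (Sum.inl i)) (cc (Sum.inr j)) := rfl
    rw [Matrix.zero_apply, hz]
    rcases i with x | i
    · exact hA' _ _ (by rw [vr1, vc3]; omega) (by rw [vr1, vc3]; omega)
    · exact hA' _ _ (by rw [vr2, vc3]; omega) (by rw [vr2, vc3]; omega)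
  have h21 : M.toBlocks₁₁.toBlocks₂₁ = 0 := by
    ext i j
    have hz : M.toBlocks₁₁.toBlocks₂₁ i j =
        A (rr (Sum.inl (Sum.inr i))) (cc (Sum.inl (Sum.inl j))) := rfl
    rw [Matrix.zero_apply, hz]
    exact hA' _ _ (by rw [vr2, vc1]; omega) (by rw [vr2, vc1]; omega)
  have hdetM : M.det =
      A ⟨0, by omega⟩ ⟨0, by omega⟩ *
      ((Matrix.of fun i j : Fin m =>
          A ⟨2 * (i : ℕ) + 2, by have := i.isLt; omega⟩
            ⟨2 * (j : ℕ) + 1, by have := j.isLt; omega⟩).det *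
      (Matrix.of fun i j : Fin m =>
          A ⟨2 * (i : ℕ) + 1, by have := i.isLt; omega⟩
            ⟨2 * (j : ℕ) + 2, by have := j.isLt; omega⟩).det) := by
    conv_lhs => rw [← Matrix.fromBlocks_toBlocks M, h12]
    rw [Matrix.det_fromBlocks_zero₁₂]
    have hX : M.toBlocks₁₁.det =
        A ⟨0, by omega⟩ ⟨0, by omega⟩ *
        (Matrix.of fun i j : Fin m =>
          A ⟨2 * (i : ℕ) + 2, by have := i.isLt; omega⟩
            ⟨2 * (j : ℕ) + 1, by have := j.isLt; omega⟩).det := by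
      conv_lhs => rw [← Matrix.fromBlocks_toBlocks M.toBlocks₁₁, h21]
      rw [Matrix.det_fromBlocks_zero₂₁, Matrix.det_fin_one]
      rfl
    have hB : M.toBlocks₂₂.det =
        (Matrix.of fun i j : Fin m =>
          A ⟨2 * (i : ℕ) + 1, by have := i.isLt; omega⟩
            ⟨2 * (j : ℕ) + 2, by have := j.isLt; omega⟩).det := rfl
    rw [hX, hB]
    ring
  -- combine
  have hsq : ((-1 : R) ^ m) * ((-1 : R) ^ m) = 1 := by
    rw [← pow_add, ← two_mul, pow_mul]
    simp
  have h1' : M.det = ((-1 : R) ^ m) * A.det := by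
    rw [hM, h1, hσsign]
    push_cast
    ring_nf
  calc A.det = ((-1 : R) ^ m * (-1 : R) ^ m) * A.det := by rw [hsq, one_mul]
    _ = (-1 : R) ^ m * M.det := by rw [mul_assoc, ← h1']
    _ = _ := by rw [hdetM]; ring
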